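/- Fix θ > 0 and β ∈ ℝ. Let b, σ, h, k₊, k₋ : ℝ → ℝ satisfy: b, σ are C¹ with σ(x)² > 0 for all x, h is C¹ and positive, k₊, k₋ are C² and positive, and set q(x) = exp(∫₀ˣ 2b(y)/σ(y)² dy) and H₋(x,θ) = (1/2)θσ(x)²k₊(x)² − (1/2)σ(x)²k₊'(x) − b(x)k₊(x) + h(x). Let J ⊂ (−∞,β) be an open interval, λ : J → ℝ a function, and for each α ∈ J let u_α : ℝ → ℝ be twice continuously differentiable on [α,β], strictly positive on [α,β], satisfying (1/2)σ(x)²u_α''(x) + b(x)u_α'(x) + θ(h(x) − λ(α))u_α(x) = 0 for all x ∈ [α,β], the boundary conditions θk₊(α)u_α(α) + u_α'(α) = 0 and θk₋(β)u_α(β) − u_α'(β) = 0, and the normalization ∫_α^β (2θq(y)/σ(y)²)u_α(y)² dy = 1. Assume the maps (α,x) ↦ u_α(x) and (α,x) ↦ u_α'(x) are continuous on {(α,x) : α ∈ J, α ≤ x ≤ β}. Then λ is differentiable on J and λ'(α) = (2θq(α)/σ(α)²) u_α(α)² (λ(α) − H₋(α,θ)) for every α ∈ J. -/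

import Mathlib

open Set intervalIntegral

open Filter MeasureTheory

lemma cont_param_integral (f : ℝ → ℝ → ℝ) (hf : Continuous (Function.uncurry f))
    (β : ℝ) (s : ℝ → ℝ) (hs : Continuous s) :
    Continuous (fun a => ∫ x in s a..β, f a x) := by
  have hfa : ∀ a : ℝ, Continuous (f a) := fun a =>
    hf.comp (Continuous.prodMk_right a)
  have key : ∀ a, ∫ x in s a..β, f a x
      = (∫ x in (0:ℝ)..β, f a x) - ∫ x in (0:ℝ)..s a, f a x := by
    intro a
    have := intervalIntegral.integral_add_adjacent_intervals (μ := MeasureTheory.volume)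
      ((hfa a).intervalIntegrable 0 (s a)) ((hfa a).intervalIntegrable (s a) β)
    linarith [this]
  simp only [key]
  exact (intervalIntegral.continuous_parametric_intervalIntegral_of_continuous hf
    continuous_const).sub
    (intervalIntegral.continuous_parametric_intervalIntegral_of_continuous hf hs)

lemma avg_tendsto (F : ℝ → ℝ → ℝ) (α₀ : ℝ)
    (hFc : Continuous (Function.uncurry F)) :
    Tendsto (fun a : ℝ =>
        (∫ x in (min a α₀)..(max a α₀), F (min a α₀) x) / (max a α₀ - min a α₀))
      (nhdsWithin α₀ {α₀}ᶜ) (nhds (F α₀ α₀)) := by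
  rw [Metric.tendsto_nhds]
  intro ε εpos
  obtain ⟨δ, δpos, hδ⟩ := Metric.continuousAt_iff.mp hFc.continuousAt (ε/2) (by positivity)
  have h1 : Metric.ball α₀ (δ/2) ∈ nhdsWithin α₀ ({α₀}ᶜ : Set ℝ) :=
    nhdsWithin_le_nhds (Metric.ball_mem_nhds _ (by positivity))
  filter_upwards [h1, self_mem_nhdsWithin] with a ha hne
  have hne' : a ≠ α₀ := hne
  set m := min a α₀ with hm
  set M := max a α₀ with hM
  have hmM : m < M := min_lt_max.mpr hne'
  have hΔ : 0 < M - m := sub_pos.mpr hmM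
  have hMm : M - m = |a - α₀| := by
    rw [hm, hM]
    rcases le_total a α₀ with hc | hc
    · rw [min_eq_left hc, max_eq_right hc, abs_of_nonpos (by linarith)]; ring
    · rw [min_eq_right hc, max_eq_left hc, abs_of_nonneg (by linarith)]
  have hdista : |a - α₀| < δ/2 := by simpa [Real.dist_eq] using ha
  have hcont : Continuous (F m) := hFc.comp (Continuous.prodMk_right m)
  have hmem : ∀ y : ℝ, m ≤ y → y ≤ M → |y - α₀| ≤ |a - α₀| := by
    intro y h1' h2'
    have hα₀m : m ≤ α₀ := min_le_right a α₀
    have hα₀M : α₀ ≤ M := le_max_right a α₀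
    rw [abs_le]; constructor <;> [linarith [hMm]; linarith [hMm]]
  have hbound : ∀ x ∈ Set.uIoc m M, ‖F m x - F α₀ α₀‖ ≤ ε/2 := by
    intro x hx
    rw [Set.uIoc_of_le hmM.le] at hx
    have hxa : |x - α₀| ≤ |a - α₀| := hmem x hx.1.le hx.2
    have hma : |m - α₀| ≤ |a - α₀| := hmem m le_rfl hmM.le
    have hd : dist ((m, x) : ℝ × ℝ) (α₀, α₀) < δ := by
      rw [Prod.dist_eq]
      simp only [Real.dist_eq]
      exact max_lt (by linarith) (by linarith)
    exact (hδ hd).le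
  have hsub : ∫ x in m..M, F m x
      = (∫ x in m..M, (F m x - F α₀ α₀)) + (M - m) * F α₀ α₀ := by
    rw [intervalIntegral.integral_sub (hcont.intervalIntegrable m M)
      (intervalIntegrable_const), intervalIntegral.integral_const]
    ring_nf
  have hle : ‖∫ x in m..M, (F m x - F α₀ α₀)‖ ≤ ε/2 * |M - m| :=
    intervalIntegral.norm_integral_le_of_norm_le_const hbound
  rw [Real.dist_eq]
  have heq : (∫ x in m..M, F m x) / (M - m) - F α₀ α₀
      = (∫ x in m..M, (F m x - F α₀ α₀)) / (M - m) := by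
    rw [hsub]; field_simp; ring
  rw [heq, abs_div, abs_of_pos hΔ]
  rw [div_lt_iff₀ hΔ]
  have habs : |M - m| = M - m := abs_of_pos hΔ
  rw [habs] at hle
  calc ‖∫ x in m..M, (F m x - F α₀ α₀)‖ ≤ ε/2 * (M - m) := hle
    _ < ε * (M - m) := by
        apply mul_lt_mul_of_pos_right _ hΔ; linarith

set_option maxHeartbeats 1000000 in
/-- formula (3.11) of the paper's Lemma 3.1 for the partial
derivative of the principal eigenvalue with respect to the left boundary
point. -/
theorem eigenvalue_derivative_left_boundary
    (θ β : ℝ) (hθ : 0 < θ)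
    (b σ h kp km : ℝ → ℝ)
    (hb : ContDiff ℝ 1 b) (hσ : ContDiff ℝ 1 σ)
    (hσpos : ∀ x : ℝ, 0 < (σ x) ^ 2)
    (hh : ContDiff ℝ 1 h) (hhpos : ∀ x : ℝ, 0 < h x)
    (hkp : ContDiff ℝ 2 kp) (hkm : ContDiff ℝ 2 km)
    (hkppos : ∀ x : ℝ, 0 < kp x) (hkmpos : ∀ x : ℝ, 0 < km x)
    (q : ℝ → ℝ)
    (hq : ∀ x : ℝ, q x = Real.exp (∫ y in (0 : ℝ)..x, 2 * b y / (σ y) ^ 2))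
    (Hm : ℝ → ℝ)
    (hHm : ∀ x, Hm x = (1 / 2) * θ * (σ x) ^ 2 * (kp x) ^ 2
      - (1 / 2) * (σ x) ^ 2 * deriv kp x - b x * kp x + h x)
    (J : Set ℝ) (hJopen : IsOpen J) (hJconn : J.OrdConnected) (hJβ : J ⊆ Iio β)
    (lam : ℝ → ℝ) (u : ℝ → ℝ → ℝ)
    (hu1 : ∀ α ∈ J, ∀ x ∈ Icc α β, DifferentiableAt ℝ (u α) x)
    (hu2 : ∀ α ∈ J, ∀ x ∈ Icc α β, DifferentiableAt ℝ (deriv (u α)) x)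
    (hu2c : ∀ α ∈ J, ContinuousOn (deriv (deriv (u α))) (Icc α β))
    (hupos : ∀ α ∈ J, ∀ x ∈ Icc α β, 0 < u α x)
    (hODE : ∀ α ∈ J, ∀ x ∈ Icc α β,
      (1 / 2) * (σ x) ^ 2 * deriv (deriv (u α)) x + b x * deriv (u α) x
        + θ * (h x - lam α) * u α x = 0)
    (hbcα : ∀ α ∈ J, θ * kp α * u α α + deriv (u α) α = 0)
    (hbcβ : ∀ α ∈ J, θ * km β * u α β - deriv (u α) β = 0)
    (hnorm : ∀ α ∈ J,
      ∫ y in α..β, (2 * θ * q y / (σ y) ^ 2) * (u α y) ^ 2 = 1)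
    (hucont : ContinuousOn (fun p : ℝ × ℝ => u p.1 p.2)
      {p : ℝ × ℝ | p.1 ∈ J ∧ p.1 ≤ p.2 ∧ p.2 ≤ β})
    (hu'cont : ContinuousOn (fun p : ℝ × ℝ => deriv (u p.1) p.2)
      {p : ℝ × ℝ | p.1 ∈ J ∧ p.1 ≤ p.2 ∧ p.2 ≤ β}) :
    ∀ α ∈ J, HasDerivAt lam
      ((2 * θ * q α / (σ α) ^ 2) * (u α α) ^ 2 * (lam α - Hm α)) α := by
  intro α₀ hα₀
  -- ## basic continuity facts
  have hσ2 : ∀ x : ℝ, (σ x) ^ 2 ≠ 0 := fun x => (hσpos x).ne'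
  have hgc : Continuous (fun x => 2 * b x / σ x ^ 2) :=
    (continuous_const.mul hb.continuous).div (hσ.continuous.pow 2) hσ2
  have hqc : Continuous q := by
    have hprim : Continuous (fun x => ∫ y in (0:ℝ)..x, 2 * b y / σ y ^ 2) :=
      intervalIntegral.continuous_primitive (fun a b' => hgc.intervalIntegrable a b') 0
    exact (Real.continuous_exp.comp hprim).congr fun x => (hq x).symm
  have hqd : ∀ x, HasDerivAt q (q x * (2 * b x / σ x ^ 2)) x := by
    intro x
    have h1 : HasDerivAt (fun v => ∫ y in (0:ℝ)..v, 2 * b y / σ y ^ 2)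
        (2 * b x / σ x ^ 2) x :=
      intervalIntegral.integral_hasDerivAt_right (hgc.intervalIntegrable 0 x)
        (hgc.stronglyMeasurableAtFilter _ _) hgc.continuousAt
    have h2 := (Real.hasDerivAt_exp (∫ y in (0:ℝ)..x, 2 * b y / σ y ^ 2)).comp x h1
    have hfun : (fun v => Real.exp (∫ y in (0:ℝ)..v, 2 * b y / σ y ^ 2)) = q :=
      funext fun v => (hq v).symm
    rw [hq x]
    exact hfun ▸ h2
  have hqpos : ∀ x, 0 < q x := fun x => (hq x) ▸ Real.exp_pos _
  have hucontOn : ∀ α ∈ J, ContinuousOn (u α) (Icc α β) :=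
    fun α hα x hx => ((hu1 α hα x hx).continuousAt).continuousWithinAt
  have hu'contOn : ∀ α ∈ J, ContinuousOn (deriv (u α)) (Icc α β) :=
    fun α hα x hx => ((hu2 α hα x hx).continuousAt).continuousWithinAt
  set w : ℝ → ℝ := fun x => 2 * θ * q x / σ x ^ 2 with hwdef
  have hwc : Continuous w :=
    ((continuous_const.mul hqc)).div (hσ.continuous.pow 2) hσ2
  -- ## key Wronskian identity
  have key : ∀ α₁, α₁ ∈ J → ∀ α₂, α₂ ∈ J → α₁ ≤ α₂ →
      (lam α₂ - lam α₁) * (∫ x in α₂..β, w x * (u α₁ x * u α₂ x))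
      = q α₂ * u α₂ α₂ * (deriv (u α₁) α₂ + θ * kp α₂ * u α₁ α₂) := by
    intro α₁ h1 α₂ h2 h12
    have hα₂β : α₂ ≤ β := (hJβ h2).le
    have hsub : Icc α₂ β ⊆ Icc α₁ β := Icc_subset_Icc h12 le_rfl
    set W : ℝ → ℝ := fun x =>
      q x * (u α₁ x * deriv (u α₂) x - u α₂ x * deriv (u α₁) x) with hWdef
    set W' : ℝ → ℝ := fun x =>
      (lam α₂ - lam α₁) * (w x * (u α₁ x * u α₂ x)) with hW'def
    have hder : ∀ x ∈ Set.uIcc α₂ β, HasDerivAt W (W' x) x := by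
      intro x hx
      rw [Set.uIcc_of_le hα₂β] at hx
      have hx1 : x ∈ Icc α₁ β := hsub hx
      have hu1x : HasDerivAt (u α₁) (deriv (u α₁) x) x := (hu1 α₁ h1 x hx1).hasDerivAt
      have hu2x : HasDerivAt (u α₂) (deriv (u α₂) x) x := (hu1 α₂ h2 x hx).hasDerivAt
      have hu1'x : HasDerivAt (deriv (u α₁)) (deriv (deriv (u α₁)) x) x :=
        (hu2 α₁ h1 x hx1).hasDerivAt
      have hu2'x : HasDerivAt (deriv (u α₂)) (deriv (deriv (u α₂)) x) x :=
        (hu2 α₂ h2 x hx).hasDerivAt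
      have hW : HasDerivAt W
          (q x * (2 * b x / σ x ^ 2) *
              (u α₁ x * deriv (u α₂) x - u α₂ x * deriv (u α₁) x)
            + q x * ((deriv (u α₁) x * deriv (u α₂) x
                + u α₁ x * deriv (deriv (u α₂)) x)
              - (deriv (u α₂) x * deriv (u α₁) x
                + u α₂ x * deriv (deriv (u α₁)) x))) x :=
        (hqd x).mul ((hu1x.mul hu2'x).sub (hu2x.mul hu1'x))
      convert hW using 1
      have e1 := hODE α₁ h1 x hx1
      have e2 := hODE α₂ h2 x hx
      have hσx := hσ2 x
      have d1 : deriv (deriv (u α₁)) x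
          = (-2) * (b x * deriv (u α₁) x + θ * (h x - lam α₁) * u α₁ x) / σ x ^ 2 := by
        rw [eq_div_iff hσx]
        linarith
      have d2 : deriv (deriv (u α₂)) x
          = (-2) * (b x * deriv (u α₂) x + θ * (h x - lam α₂) * u α₂ x) / σ x ^ 2 := by
        rw [eq_div_iff hσx]
        linarith
      rw [hW'def, hwdef]
      simp only
      rw [d1, d2]
      field_simp
      ring
    have hcont1 : ContinuousOn (u α₁) (Set.uIcc α₂ β) := by
      rw [Set.uIcc_of_le hα₂β]; exact (hucontOn α₁ h1).mono hsub
    have hcont2 : ContinuousOn (u α₂) (Set.uIcc α₂ β) := by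
      rw [Set.uIcc_of_le hα₂β]; exact hucontOn α₂ h2
    have hint : IntervalIntegrable W' MeasureTheory.volume α₂ β := by
      apply ContinuousOn.intervalIntegrable
      exact continuousOn_const.mul ((hwc.continuousOn).mul (hcont1.mul hcont2))
    have hFTC := intervalIntegral.integral_eq_sub_of_hasDerivAt hder hint
    have hpull : ∫ x in α₂..β, W' x
        = (lam α₂ - lam α₁) * ∫ x in α₂..β, w x * (u α₁ x * u α₂ x) := by
      rw [hW'def]
      exact intervalIntegral.integral_const_mul _ _
    have hWβ : W β = 0 := by
      have b1 := hbcβ α₁ h1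
      have b2 := hbcβ α₂ h2
      rw [hWdef]
      simp only
      linear_combination (-(q β * u α₁ β)) * b2 + (q β * u α₂ β) * b1
    have hWα₂ : W α₂
        = - (q α₂ * u α₂ α₂ * (deriv (u α₁) α₂ + θ * kp α₂ * u α₁ α₂)) := by
      have b2 := hbcα α₂ h2
      rw [hWdef]
      simp only
      linear_combination (q α₂ * u α₁ α₂) * b2
    rw [hpull] at hFTC
    rw [hFTC, hWβ, hWα₂]
    ring
  -- ## a compact interval [c,d] ⊆ J around α₀
  obtain ⟨ε, εpos, hball⟩ := Metric.isOpen_iff.mp hJopen α₀ hα₀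
  set c : ℝ := α₀ - ε/2 with hcdef
  set d : ℝ := α₀ + ε/2 with hddef
  have hcd : Icc c d ⊆ J := by
    intro x hx
    apply hball
    rw [Metric.mem_ball, Real.dist_eq, abs_lt]
    have h1x := hx.1; have h2x := hx.2
    rw [hcdef] at h1x; rw [hddef] at h2x
    constructor <;> linarith
  have hcltd : c < d := by rw [hcdef, hddef]; linarith
  have hα₀mem : α₀ ∈ Icc c d := by
    constructor <;> [rw [hcdef]; rw [hddef]] <;> linarith
  have hdβ : d < β := hJβ (hcd (right_mem_Icc.mpr hcltd.le))
  -- clamping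
  set cl : ℝ → ℝ := fun a => max c (min a d) with hcldef
  have hclc : Continuous cl := continuous_const.max (continuous_id.min continuous_const)
  have hclmem : ∀ a, cl a ∈ Icc c d :=
    fun a => ⟨le_max_left _ _, max_le hcltd.le (min_le_right _ _)⟩
  have hcleq : ∀ a ∈ Icc c d, cl a = a := by
    intro a ha
    rw [hcldef]
    simp only
    rw [min_eq_left ha.2, max_eq_right ha.1]
  set pt : ℝ → ℝ → ℝ := fun a x => min (max x (cl a)) β with hptdef
  have hptc : Continuous (fun p : ℝ × ℝ => pt p.1 p.2) :=
    ((continuous_snd.max (hclc.comp continuous_fst)).min continuous_const)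
  have hmemS : ∀ a x : ℝ, ((cl a, pt a x) : ℝ × ℝ)
      ∈ {p : ℝ × ℝ | p.1 ∈ J ∧ p.1 ≤ p.2 ∧ p.2 ≤ β} := by
    intro a x
    refine ⟨hcd (hclmem a), le_min (le_max_right _ _) ?_, min_le_right _ _⟩
    exact le_trans (hclmem a).2 hdβ.le
  set U : ℝ → ℝ → ℝ := fun a x => u (cl a) (pt a x) with hUdef
  set V : ℝ → ℝ → ℝ := fun a x => deriv (u (cl a)) (pt a x) with hVdef
  have hpairc : Continuous (fun p : ℝ × ℝ => ((cl p.1, pt p.1 p.2) : ℝ × ℝ)) :=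
    (hclc.comp continuous_fst).prodMk hptc
  have hUc : Continuous (Function.uncurry U) :=
    hucont.comp_continuous hpairc (fun p => hmemS p.1 p.2)
  have hVc : Continuous (Function.uncurry V) :=
    hu'cont.comp_continuous hpairc (fun p => hmemS p.1 p.2)
  have hpteq : ∀ a ∈ Icc c d, ∀ x, a ≤ x → x ≤ β → pt a x = x := by
    intro a ha x h1' h2'
    rw [hptdef]
    simp only
    rw [hcleq a ha, max_eq_left h1', min_eq_left h2']
  have hUeq : ∀ a ∈ Icc c d, ∀ x, a ≤ x → x ≤ β → U a x = u a x := by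
    intro a ha x h1' h2'
    rw [hUdef]; simp only; rw [hcleq a ha, hpteq a ha x h1' h2']
  have hVeq : ∀ a ∈ Icc c d, ∀ x, a ≤ x → x ≤ β → V a x = deriv (u a) x := by
    intro a ha x h1' h2'
    rw [hVdef]; simp only; rw [hcleq a ha, hpteq a ha x h1' h2']
  -- ## min / max notation
  have hmmem : ∀ a ∈ Icc c d, min a α₀ ∈ Icc c d :=
    fun a ha => ⟨le_min ha.1 hα₀mem.1, min_le_of_left_le ha.2⟩
  have hMmem : ∀ a ∈ Icc c d, max a α₀ ∈ Icc c d :=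
    fun a ha => ⟨le_max_of_le_left ha.1, max_le ha.2 hα₀mem.2⟩
  -- ## the normalization-like integral N
  set N : ℝ → ℝ := fun a => ∫ x in (max a α₀)..β, w x * (U α₀ x * U a x) with hNdef
  have hNc : Continuous N := by
    apply cont_param_integral (fun a x => w x * (U α₀ x * U a x)) _ β
      (fun a => max a α₀) (continuous_id.max continuous_const)
    apply Continuous.mul (hwc.comp continuous_snd)
    exact Continuous.mul
      (hUc.comp ((continuous_const.prodMk continuous_snd :
        Continuous fun p : ℝ × ℝ => ((α₀, p.2) : ℝ × ℝ)))) hUc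
  have hNeq : ∀ a ∈ Icc c d, N a
      = ∫ x in (max a α₀)..β, w x * (u (min a α₀) x * u (max a α₀) x) := by
    intro a ha
    rw [hNdef]
    simp only
    apply intervalIntegral.integral_congr
    intro x hx
    have hMβ : max a α₀ ≤ β := le_trans (hMmem a ha).2 hdβ.le
    rw [Set.uIcc_of_le hMβ] at hx
    have hU0 : U α₀ x = u α₀ x :=
      hUeq α₀ hα₀mem x (le_trans (le_max_right a α₀) hx.1) hx.2
    have hUa : U a x = u a x :=
      hUeq a ha x (le_trans (le_max_left a α₀) hx.1) hx.2
    show w x * (U α₀ x * U a x) = w x * (u (min a α₀) x * u (max a α₀) x)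
    rw [hU0, hUa]
    rcases le_total a α₀ with hc' | hc'
    · rw [min_eq_left hc', max_eq_right hc']; ring
    · rw [min_eq_right hc', max_eq_left hc']
  have hN1 : N α₀ = 1 := by
    rw [hNeq α₀ hα₀mem, max_self, min_self, ← hnorm α₀ hα₀]
    apply intervalIntegral.integral_congr
    intro x _
    rw [hwdef]
    simp only
    ring
  -- ## FTC identity for the boundary functional G
  set A : ℝ → ℝ → ℝ := fun a x =>
    -(2 / σ x ^ 2) * (b x * V a x + θ * h x * U a x)
      + θ * (deriv kp x * U a x + kp x * V a x) with hAdef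
  set B : ℝ → ℝ → ℝ := fun a x => (2 * θ / σ x ^ 2) * U a x with hBdef
  have hkpc : Continuous (deriv kp) := hkp.continuous_deriv one_le_two
  have hkpd : ∀ x, HasDerivAt kp (deriv kp x) x :=
    fun x => (hkp.differentiable two_ne_zero).differentiableAt.hasDerivAt
  have hAc : Continuous (Function.uncurry A) := by
    rw [hAdef]
    apply Continuous.add
    · apply Continuous.mul
      · exact ((continuous_const.div (hσ.continuous.pow 2) hσ2).neg).comp continuous_snd
      · exact ((hb.continuous.comp continuous_snd).mul hVc).add
          (((continuous_const.mul (hh.continuous)).comp continuous_snd).mul hUc)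
    · exact continuous_const.mul
        (((hkpc.comp continuous_snd).mul hUc).add
          ((hkp.continuous.comp continuous_snd).mul hVc))
  have hBc : Continuous (Function.uncurry B) := by
    rw [hBdef]
    exact ((continuous_const.div (hσ.continuous.pow 2) hσ2).comp continuous_snd).mul hUc
  have hG : ∀ a ∈ Icc c d, ∀ x₀, a ≤ x₀ → x₀ ≤ β →
      deriv (u a) x₀ + θ * kp x₀ * u a x₀
        = ∫ x in a..x₀, (A a x + lam a * B a x) := by
    intro a ha x₀ h1' h2'
    have haJ : a ∈ J := hcd ha
    have hsub : Set.uIcc a x₀ ⊆ Icc a β := by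
      rw [Set.uIcc_of_le h1']
      exact Icc_subset_Icc le_rfl h2'
    set G : ℝ → ℝ := fun x => deriv (u a) x + θ * (kp x * u a x) with hGdef
    set G' : ℝ → ℝ := fun x => deriv (deriv (u a)) x
      + θ * (deriv kp x * u a x + kp x * deriv (u a) x) with hG'def
    have hder : ∀ x ∈ Set.uIcc a x₀, HasDerivAt G (G' x) x := by
      intro x hx
      have hxm : x ∈ Icc a β := hsub hx
      exact ((hu2 a haJ x hxm).hasDerivAt).add
        ((HasDerivAt.const_mul θ ((hkpd x).mul ((hu1 a haJ x hxm).hasDerivAt))))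
    have hint : IntervalIntegrable G' MeasureTheory.volume a x₀ := by
      apply ContinuousOn.intervalIntegrable
      apply ContinuousOn.add ((hu2c a haJ).mono hsub)
      apply ContinuousOn.mul continuousOn_const
      exact ((hkpc.continuousOn).mul ((hucontOn a haJ).mono hsub)).add
        ((hkp.continuous.continuousOn).mul ((hu'contOn a haJ).mono hsub))
    have hFTC := intervalIntegral.integral_eq_sub_of_hasDerivAt hder hint
    have hG0 : G a = 0 := by
      have := hbcα a haJ
      rw [hGdef]; simp only; linarith
    have hcongr : ∫ x in a..x₀, G' x = ∫ x in a..x₀, (A a x + lam a * B a x) := by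
      apply intervalIntegral.integral_congr
      intro x hx
      have hxm : x ∈ Icc a β := hsub hx
      have hUx : U a x = u a x := hUeq a ha x hxm.1 hxm.2
      have hVx : V a x = deriv (u a) x := hVeq a ha x hxm.1 hxm.2
      have hode := hODE a haJ x hxm
      rw [hG'def, hAdef, hBdef]
      simp only
      rw [hUx, hVx]
      have hd2 : deriv (deriv (u a)) x
          = (-2) * (b x * deriv (u a) x + θ * (h x - lam a) * u a x) / σ x ^ 2 := by
        rw [eq_div_iff (hσ2 x)]
        linarith
      rw [hd2]
      field_simp
      ring
    rw [← hcongr, hFTC, hG0, sub_zero]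
    rw [hGdef]
    simp only
    ring
  -- ## eventual facts near α₀
  have hcα : c < α₀ := by rw [hcdef]; linarith
  have hαd : α₀ < d := by rw [hddef]; linarith
  have hα₀β : α₀ ≤ β := (hJβ hα₀).le
  have hIoomem : ∀ᶠ a in nhds α₀, a ∈ Ioo c d :=
    IsOpen.eventually_mem isOpen_Ioo ⟨hcα, hαd⟩
  have hNhalf : ∀ᶠ a in nhds α₀, (0:ℝ) < N a := by
    have : ∀ᶠ y in nhds (N α₀), (0:ℝ) < y := by
      rw [hN1]; exact eventually_gt_nhds (by norm_num)
    exact hNc.continuousAt.eventually this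
  -- ## the identity for the increment of lam
  have hlamid : ∀ᶠ a in nhds α₀,
      lam (max a α₀) - lam (min a α₀)
        = q (max a α₀) * U (max a α₀) (max a α₀)
            * (V (min a α₀) (max a α₀)
              + θ * kp (max a α₀) * U (min a α₀) (max a α₀)) / N a := by
    filter_upwards [hIoomem, hNhalf] with a haI hNa
    have ha' : a ∈ Icc c d := Ioo_subset_Icc_self haI
    have hm := hmmem a ha'
    have hM := hMmem a ha'
    have hmJ : min a α₀ ∈ J := hcd hm
    have hMJ : max a α₀ ∈ J := hcd hM
    have hMβ : max a α₀ ≤ β := le_trans hM.2 hdβ.le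
    have hUM : U (max a α₀) (max a α₀) = u (max a α₀) (max a α₀) :=
      hUeq _ hM _ le_rfl hMβ
    have hUmM : U (min a α₀) (max a α₀) = u (min a α₀) (max a α₀) :=
      hUeq _ hm _ min_le_max hMβ
    have hVmM : V (min a α₀) (max a α₀) = deriv (u (min a α₀)) (max a α₀) :=
      hVeq _ hm _ min_le_max hMβ
    have hkey := key (min a α₀) hmJ (max a α₀) hMJ min_le_max
    rw [← hNeq a ha'] at hkey
    rw [hUM, hUmM, hVmM, eq_div_iff hNa.ne']
    linarith [hkey]
  -- ## continuity of lam at α₀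
  have hYc : ContinuousAt (fun a => q (max a α₀) * U (max a α₀) (max a α₀)
      * (V (min a α₀) (max a α₀)
        + θ * kp (max a α₀) * U (min a α₀) (max a α₀)) / N a) α₀ := by
    have hmaxc : Continuous (fun a : ℝ => max a α₀) := continuous_id.max continuous_const
    have hminc : Continuous (fun a : ℝ => min a α₀) := continuous_id.min continuous_const
    apply ContinuousAt.div _ hNc.continuousAt (by rw [hN1]; norm_num)
    apply ContinuousAt.mul
    · exact ((hqc.comp hmaxc).mul
        (hUc.comp (hmaxc.prodMk hmaxc))).continuousAt
    · exact ((hVc.comp (hminc.prodMk hmaxc)).add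
        ((continuous_const.mul (hkp.continuous.comp hmaxc)).mul
          (hUc.comp (hminc.prodMk hmaxc)))).continuousAt
  have hU00 : U α₀ α₀ = u α₀ α₀ := hUeq α₀ hα₀mem α₀ le_rfl hα₀β
  have hV00 : V α₀ α₀ = deriv (u α₀) α₀ := hVeq α₀ hα₀mem α₀ le_rfl hα₀β
  have hbc0 := hbcα α₀ hα₀
  have hY0 : q (max α₀ α₀) * U (max α₀ α₀) (max α₀ α₀)
      * (V (min α₀ α₀) (max α₀ α₀)
        + θ * kp (max α₀ α₀) * U (min α₀ α₀) (max α₀ α₀)) / N α₀ = 0 := by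
    rw [max_self, min_self, hN1, hU00, hV00]
    have : deriv (u α₀) α₀ + θ * kp α₀ * u α₀ α₀ = 0 := by linarith
    rw [this]
    simp
  have hlamcont : ContinuousAt lam α₀ := by
    have hY : Tendsto (fun a => |q (max a α₀) * U (max a α₀) (max a α₀)
        * (V (min a α₀) (max a α₀)
          + θ * kp (max a α₀) * U (min a α₀) (max a α₀)) / N a|)
        (nhds α₀) (nhds 0) := by
      have := (hYc.abs).tendsto
      rw [hY0] at this
      simpa using this
    have hsq : Tendsto (fun a => lam a - lam α₀) (nhds α₀) (nhds 0) := by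
      apply squeeze_zero_norm' _ hY
      filter_upwards [hlamid] with a hid
      rw [Real.norm_eq_abs, ← hid]
      rcases le_total a α₀ with hc' | hc'
      · rw [max_eq_right hc', min_eq_left hc', abs_sub_comm]
      · rw [max_eq_left hc', min_eq_right hc']
    have := hsq.add (tendsto_const_nhds (x := lam α₀))
    simp only [sub_add_cancel, zero_add] at this
    exact this
  -- ## the slope identity
  have hmaxc : Continuous (fun a : ℝ => max a α₀) := continuous_id.max continuous_const
  have hminc : Continuous (fun a : ℝ => min a α₀) := continuous_id.min continuous_const
  have hslopeid : ∀ᶠ a in nhdsWithin α₀ ({α₀}ᶜ : Set ℝ),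
      slope lam α₀ a
        = (q (max a α₀) * U (max a α₀) (max a α₀) / N a)
            * ((∫ x in (min a α₀)..(max a α₀), A (min a α₀) x)
                  / (max a α₀ - min a α₀)
              + lam (min a α₀)
                * ((∫ x in (min a α₀)..(max a α₀), B (min a α₀) x)
                  / (max a α₀ - min a α₀))) := by
    filter_upwards [hlamid.filter_mono nhdsWithin_le_nhds,
      hNhalf.filter_mono nhdsWithin_le_nhds,
      hIoomem.filter_mono nhdsWithin_le_nhds, self_mem_nhdsWithin]
      with a hid hNa haI hne
    have hne' : a ≠ α₀ := hne
    have ha' : a ∈ Icc c d := Ioo_subset_Icc_self haI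
    have hm := hmmem a ha'
    have hM := hMmem a ha'
    have hMβ : max a α₀ ≤ β := le_trans hM.2 hdβ.le
    have hΔpos : 0 < max a α₀ - min a α₀ := sub_pos.mpr (min_lt_max.mpr hne')
    -- the Γ identity
    have hAcont : Continuous (A (min a α₀)) :=
      hAc.comp (Continuous.prodMk_right (min a α₀))
    have hBcont : Continuous (B (min a α₀)) :=
      hBc.comp (Continuous.prodMk_right (min a α₀))
    have hsplit : ∫ x in (min a α₀)..(max a α₀),
          (A (min a α₀) x + lam (min a α₀) * B (min a α₀) x)
        = (∫ x in (min a α₀)..(max a α₀), A (min a α₀) x)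
          + lam (min a α₀) * ∫ x in (min a α₀)..(max a α₀), B (min a α₀) x := by
      rw [intervalIntegral.integral_add (hAcont.intervalIntegrable _ _)
        ((hBcont.intervalIntegrable _ _).const_mul _),
        intervalIntegral.integral_const_mul]
    have hΓ : V (min a α₀) (max a α₀) + θ * kp (max a α₀) * U (min a α₀) (max a α₀)
        = (∫ x in (min a α₀)..(max a α₀), A (min a α₀) x)
          + lam (min a α₀) * ∫ x in (min a α₀)..(max a α₀), B (min a α₀) x := by
      rw [hVeq _ hm _ min_le_max hMβ, hUeq _ hm _ min_le_max hMβ]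
      rw [hG (min a α₀) hm (max a α₀) min_le_max hMβ]
      exact hsplit
    have hslopeval : slope lam α₀ a
        = (lam (max a α₀) - lam (min a α₀)) / (max a α₀ - min a α₀) := by
      rw [slope_def_field]
      rcases le_total a α₀ with hc' | hc'
      · rw [max_eq_right hc', min_eq_left hc']
        have h1' : a - α₀ ≠ 0 := sub_ne_zero.mpr hne'
        have h2' : α₀ - a ≠ 0 := sub_ne_zero.mpr (Ne.symm hne')
        rw [div_eq_div_iff h1' h2']
        ring
      · rw [max_eq_left hc', min_eq_right hc']
    rw [hslopeval, hid, hΓ]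
    field_simp
  -- ## limits of the factors
  have T1 : Tendsto (fun a => q (max a α₀) * U (max a α₀) (max a α₀) / N a)
      (nhdsWithin α₀ ({α₀}ᶜ : Set ℝ)) (nhds (q α₀ * U α₀ α₀ / N α₀)) := by
    have hca : ContinuousAt (fun a => q (max a α₀) * U (max a α₀) (max a α₀) / N a) α₀ := by
      apply ContinuousAt.div _ hNc.continuousAt (by rw [hN1]; norm_num)
      exact ((hqc.comp hmaxc).mul (hUc.comp (hmaxc.prodMk hmaxc))).continuousAt
    have h5 : Tendsto (fun a => q (max a α₀) * U (max a α₀) (max a α₀) / N a)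
        (nhdsWithin α₀ ({α₀}ᶜ : Set ℝ))
        (nhds (q (max α₀ α₀) * U (max α₀ α₀) (max α₀ α₀) / N α₀)) :=
      hca.tendsto.mono_left nhdsWithin_le_nhds
    simpa [max_self] using h5
  have T2 := avg_tendsto A α₀ hAc
  have T3 := avg_tendsto B α₀ hBc
  have T4 : Tendsto (fun a => lam (min a α₀)) (nhdsWithin α₀ ({α₀}ᶜ : Set ℝ))
      (nhds (lam α₀)) := by
    have hmt : Tendsto (fun a : ℝ => min a α₀) (nhds α₀) (nhds α₀) := by
      have h6 : Tendsto (fun a : ℝ => min a α₀) (nhds α₀) (nhds (min α₀ α₀)) :=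
        hminc.tendsto α₀
      simpa [min_self] using h6
    exact (hlamcont.tendsto.comp hmt).mono_left nhdsWithin_le_nhds
  have Tfinal : Tendsto (fun a =>
      (q (max a α₀) * U (max a α₀) (max a α₀) / N a)
        * ((∫ x in (min a α₀)..(max a α₀), A (min a α₀) x)
              / (max a α₀ - min a α₀)
          + lam (min a α₀)
            * ((∫ x in (min a α₀)..(max a α₀), B (min a α₀) x)
              / (max a α₀ - min a α₀))))
      (nhdsWithin α₀ ({α₀}ᶜ : Set ℝ))
      (nhds ((q α₀ * U α₀ α₀ / N α₀) * (A α₀ α₀ + lam α₀ * B α₀ α₀))) :=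
    T1.mul (T2.add (T4.mul T3))
  -- ## value of the limit
  have hval : (q α₀ * U α₀ α₀ / N α₀) * (A α₀ α₀ + lam α₀ * B α₀ α₀)
      = 2 * θ * q α₀ / σ α₀ ^ 2 * u α₀ α₀ ^ 2 * (lam α₀ - Hm α₀) := by
    have hA00 : A α₀ α₀ = -(2 / σ α₀ ^ 2) * (b α₀ * deriv (u α₀) α₀
        + θ * h α₀ * u α₀ α₀)
        + θ * (deriv kp α₀ * u α₀ α₀ + kp α₀ * deriv (u α₀) α₀) := by
      rw [hAdef]; simp only; rw [hU00, hV00]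
    have hB00 : B α₀ α₀ = (2 * θ / σ α₀ ^ 2) * u α₀ α₀ := by
      rw [hBdef]; simp only; rw [hU00]
    have hderiv0 : deriv (u α₀) α₀ = -(θ * kp α₀ * u α₀ α₀) := by linarith
    have hσne : σ α₀ ≠ 0 := fun hz => hσ2 α₀ (by rw [hz]; ring)
    rw [hN1, hA00, hB00, hHm α₀, hderiv0, hU00]
    field_simp
    ring
  rw [hasDerivAt_iff_tendsto_slope]
  rw [← hval]
  apply Tendsto.congr' _ Tfinal
  filter_upwards [hslopeid] with a ha
  exact ha.symm
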